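/- Let U ∈ ℂ^{t×r}, V ∈ ℂ^{p×r} have orthonormal columns and let Q ∈ ℂ^{t×p} satisfy P_T(Q) = UV† and ‖P_{T^⊥}(Q)‖ ≤ 1/2. Then ‖Q‖_F ≤ (1/2)·sqrt(min(t,p) + 3r). -/

import Mathlib

open Matrix

noncomputable def frob {m n : Type*} [Fintype m] [Fintype n] (A : Matrix m n ℂ) : ℝ :=
  Real.sqrt (∑ i, ∑ j, ‖A i j‖ ^ 2)

noncomputable def spec {m n : Type*} [Fintype m] [Fintype n] [DecidableEq m] [DecidableEq n]
    (A : Matrix m n ℂ) : ℝ :=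
  ‖LinearMap.toContinuousLinearMap (Matrix.toEuclideanLin A)‖

noncomputable def colNorm {m n : Type*} [Fintype m] (A : Matrix m n ℂ) (j : n) : ℝ :=
  Real.sqrt (∑ i, ‖A i j‖ ^ 2)

set_option maxHeartbeats 1000000

noncomputable def frobSq {m n : Type*} [Fintype m] [Fintype n] (A : Matrix m n ℂ) : ℝ :=
  ∑ i, ∑ j, ‖A i j‖ ^ 2

lemma frobSq_nonneg {m n : Type*} [Fintype m] [Fintype n] (A : Matrix m n ℂ) : 0 ≤ frobSq A := by
  unfold frobSq; positivity

lemma frobSq_eq_trace {m n : Type*} [Fintype m] [Fintype n] (A : Matrix m n ℂ) :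
    frobSq A = (Matrix.trace (A * Aᴴ)).re := by
  simp [frobSq, Matrix.trace, Matrix.mul_apply, Matrix.conjTranspose_apply,
    Complex.mul_conj, Complex.sq_norm, Matrix.diag]

lemma spec_conjTranspose {m n : Type*} [Fintype m] [Fintype n] [DecidableEq m] [DecidableEq n]
    (A : Matrix m n ℂ) : spec Aᴴ = spec A := by
  unfold spec
  rw [Matrix.toEuclideanLin_conjTranspose_eq_adjoint, LinearMap.adjoint_toContinuousLinearMap]
  exact ContinuousLinearMap.adjoint.norm_map _

lemma frobSq_conjTranspose {m n : Type*} [Fintype m] [Fintype n] (A : Matrix m n ℂ) :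
    frobSq Aᴴ = frobSq A := by
  unfold frobSq
  rw [Finset.sum_comm]
  simp [Matrix.conjTranspose_apply]

lemma frobSq_pythagoras {m n : Type*} [Fintype m] [Fintype n] (A B : Matrix m n ℂ)
    (h : A * Bᴴ = 0) : frobSq (A + B) = frobSq A + frobSq B := by
  have hc : ∀ i, ∑ j, (A i j * (starRingEnd ℂ) (B i j)).re = 0 := by
    intro i
    have h0 : (A * Bᴴ) i i = 0 := by rw [h]; rfl
    rw [Matrix.mul_apply] at h0
    have := congrArg Complex.re h0
    simpa [Matrix.conjTranspose_apply, Complex.re_sum] using this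
  unfold frobSq
  rw [← Finset.sum_add_distrib]
  refine Finset.sum_congr rfl fun i _ => ?_
  have key : ∀ j, ‖(A + B) i j‖ ^ 2 =
      ‖A i j‖ ^ 2 + ‖B i j‖ ^ 2
        + 2 * (A i j * (starRingEnd ℂ) (B i j)).re := by
    intro j
    simp only [Matrix.add_apply, Complex.sq_norm]
    exact Complex.normSq_add _ _
  rw [Finset.sum_congr rfl fun j _ => key j]
  rw [Finset.sum_add_distrib, Finset.sum_add_distrib, ← Finset.mul_sum, hc i]
  ring

lemma euclid_norm {n : ℕ} (y : Fin n → ℂ) :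
    ‖(WithLp.equiv 2 (Fin n → ℂ)).symm y‖ = Real.sqrt (∑ i, ‖y i‖ ^ 2) := by
  rw [EuclideanSpace.norm_eq]
  simp

lemma mulVec_sq_le {t p : ℕ} (A : Matrix (Fin t) (Fin p) ℂ) (x : Fin p → ℂ) :
    ∑ i, ‖A.mulVec x i‖ ^ 2 ≤ spec A ^ 2 * ∑ j, ‖x j‖ ^ 2 := by
  have h2 : (LinearMap.toContinuousLinearMap (Matrix.toEuclideanLin A))
        ((WithLp.equiv 2 (Fin p → ℂ)).symm x)
      = (WithLp.equiv 2 (Fin t → ℂ)).symm (A.mulVec x) :=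
    Matrix.toEuclideanLin_apply_piLp_toLp A x
  have h1 : ‖(WithLp.equiv 2 (Fin t → ℂ)).symm (A.mulVec x)‖ ≤
      spec A * ‖(WithLp.equiv 2 (Fin p → ℂ)).symm x‖ := by
    rw [← h2]; exact ContinuousLinearMap.le_opNorm _ _
  rw [euclid_norm, euclid_norm] at h1
  have hy : (0:ℝ) ≤ spec A * Real.sqrt (∑ j, ‖x j‖ ^ 2) :=
    mul_nonneg (norm_nonneg _) (Real.sqrt_nonneg _)
  have h3 := (Real.sqrt_le_left hy).mp h1
  calc ∑ i, ‖A.mulVec x i‖ ^ 2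
      ≤ (spec A * Real.sqrt (∑ j, ‖x j‖ ^ 2)) ^ 2 := h3
    _ = spec A ^ 2 * ∑ j, ‖x j‖ ^ 2 := by
        rw [mul_pow, Real.sq_sqrt (by positivity)]

lemma frobSq_le_of_right_proj {t p : ℕ} (A : Matrix (Fin t) (Fin p) ℂ)
    (P : Matrix (Fin p) (Fin p) ℂ) (h : A * P = A) :
    frobSq A ≤ spec A ^ 2 * frobSq P := by
  unfold frobSq
  rw [Finset.sum_comm]
  have hcol : ∀ j, ∑ i, ‖A i j‖ ^ 2 ≤
      spec A ^ 2 * ∑ k, ‖P k j‖ ^ 2 := by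
    intro j
    have hcoleq : ∀ i, A i j = A.mulVec (fun k => P k j) i := by
      intro i
      have h2 : A.mulVec (fun k => P k j) i = (A * P) i j := by
        simp [Matrix.mulVec, dotProduct, Matrix.mul_apply]
      rw [h2, h]
    calc ∑ i, ‖A i j‖ ^ 2
        = ∑ i, ‖A.mulVec (fun k => P k j) i‖ ^ 2 := by
          exact Finset.sum_congr rfl fun i _ => by rw [hcoleq i]
      _ ≤ spec A ^ 2 * ∑ k, ‖P k j‖ ^ 2 := mulVec_sq_le A _
  calc ∑ j, ∑ i, ‖A i j‖ ^ 2
      ≤ ∑ j, spec A ^ 2 * ∑ k, ‖P k j‖ ^ 2 :=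
        Finset.sum_le_sum fun j _ => hcol j
    _ = spec A ^ 2 * ∑ j, ∑ k, ‖P k j‖ ^ 2 := by rw [Finset.mul_sum]
    _ = spec A ^ 2 * ∑ k, ∑ j, ‖P k j‖ ^ 2 := by rw [Finset.sum_comm]

/-- If P_T(Q) = UV† and ‖P_{T⊥}(Q)‖ ≤ 1/2 then ‖Q‖_F ≤ (1/2)·sqrt(min(t,p) + 3r). -/
theorem dual_certificate_frobenius_bound {t p r : ℕ} (U : Matrix (Fin t) (Fin r) ℂ)
    (V : Matrix (Fin p) (Fin r) ℂ) (hU : Uᴴ * U = 1) (hV : Vᴴ * V = 1)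
    (Q : Matrix (Fin t) (Fin p) ℂ)
    (hPT : U * Uᴴ * Q + Q * (V * Vᴴ) - U * Uᴴ * Q * (V * Vᴴ) = U * Vᴴ)
    (hspec : spec ((1 - U * Uᴴ) * Q * (1 - V * Vᴴ)) ≤ 1 / 2) :
    frob Q ≤ (1 / 2) * Real.sqrt ((min t p : ℝ) + 3 * r) := by
  set B := (1 - U * Uᴴ) * Q * (1 - V * Vᴴ) with hB
  -- basic projection identities
  have hVV : (V * Vᴴ) * (V * Vᴴ) = V * Vᴴ := by
    rw [Matrix.mul_assoc, ← Matrix.mul_assoc Vᴴ, hV, Matrix.one_mul]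
  have hUU : (U * Uᴴ) * (U * Uᴴ) = U * Uᴴ := by
    rw [Matrix.mul_assoc, ← Matrix.mul_assoc Uᴴ, hU, Matrix.one_mul]
  have hPV : (1 - V * Vᴴ) * (1 - V * Vᴴ) = 1 - V * Vᴴ := by
    rw [Matrix.mul_sub, Matrix.mul_one, Matrix.sub_mul, Matrix.one_mul, hVV]
    abel
  have hPU : (1 - U * Uᴴ) * (1 - U * Uᴴ) = 1 - U * Uᴴ := by
    rw [Matrix.mul_sub, Matrix.mul_one, Matrix.sub_mul, Matrix.one_mul, hUU]
    abel
  -- Q = U Vᴴ + B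
  have hQ : Q = U * Vᴴ + B := by
    have hexp : B = Q - (U * Uᴴ * Q + Q * (V * Vᴴ) - U * Uᴴ * Q * (V * Vᴴ)) := by
      rw [hB]
      simp only [Matrix.sub_mul, Matrix.mul_sub, Matrix.one_mul, Matrix.mul_one]
      abel
    rw [hexp, hPT]
    abel
  -- cross term vanishes
  have hV0 : Vᴴ * (1 - V * Vᴴ) = 0 := by
    rw [Matrix.mul_sub, Matrix.mul_one, ← Matrix.mul_assoc, hV, Matrix.one_mul, sub_self]
  have hBH : Bᴴ = (1 - V * Vᴴ) * (Qᴴ * (1 - U * Uᴴ)) := by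
    rw [hB]
    simp [Matrix.conjTranspose_mul, Matrix.conjTranspose_sub, Matrix.conjTranspose_one,
      Matrix.mul_assoc]
  have hcross : (U * Vᴴ) * Bᴴ = 0 := by
    rw [hBH, Matrix.mul_assoc U, ← Matrix.mul_assoc Vᴴ, hV0, Matrix.zero_mul, Matrix.mul_zero]
  -- Pythagoras
  have hpyth : frobSq Q = frobSq (U * Vᴴ) + frobSq B := by
    rw [hQ]; exact frobSq_pythagoras _ _ hcross
  -- frobSq (U Vᴴ) = r
  have hUVr : frobSq (U * Vᴴ) = (r : ℝ) := by
    rw [frobSq_eq_trace]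
    have h1 : (U * Vᴴ) * (U * Vᴴ)ᴴ = U * Uᴴ := by
      rw [Matrix.conjTranspose_mul, Matrix.conjTranspose_conjTranspose, Matrix.mul_assoc,
        ← Matrix.mul_assoc Vᴴ, hV, Matrix.one_mul]
    rw [h1, Matrix.trace_mul_comm, hU, Matrix.trace_one]
    simp
  -- frobSq of the projections
  have hfPV : frobSq (1 - V * Vᴴ) = (p : ℝ) - r := by
    rw [frobSq_eq_trace]
    have hH : (1 - V * Vᴴ)ᴴ = 1 - V * Vᴴ := by
      simp [Matrix.conjTranspose_sub, Matrix.conjTranspose_mul, Matrix.conjTranspose_one]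
    rw [hH, hPV, Matrix.trace_sub, Matrix.trace_one, Matrix.trace_mul_comm, hV,
      Matrix.trace_one]
    simp
  have hfPU : frobSq (1 - U * Uᴴ) = (t : ℝ) - r := by
    rw [frobSq_eq_trace]
    have hH : (1 - U * Uᴴ)ᴴ = 1 - U * Uᴴ := by
      simp [Matrix.conjTranspose_sub, Matrix.conjTranspose_mul, Matrix.conjTranspose_one]
    rw [hH, hPU, Matrix.trace_sub, Matrix.trace_one, Matrix.trace_mul_comm, hU,
      Matrix.trace_one]
    simp
  have hprnn : (0:ℝ) ≤ (p : ℝ) - r := hfPV ▸ frobSq_nonneg _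
  have htrnn : (0:ℝ) ≤ (t : ℝ) - r := hfPU ▸ frobSq_nonneg _
  -- bounds on frobSq B
  have hBr : B * (1 - V * Vᴴ) = B := by
    rw [hB, Matrix.mul_assoc, hPV]
  have hBHr : Bᴴ * (1 - U * Uᴴ) = Bᴴ := by
    rw [hBH, Matrix.mul_assoc, Matrix.mul_assoc, hPU]
  have hsq : spec B ^ 2 ≤ (1/4 : ℝ) := by
    have h0 : (0:ℝ) ≤ spec B := norm_nonneg _
    nlinarith [hspec]
  have hb1 : frobSq B ≤ (1/4 : ℝ) * ((p:ℝ) - r) := by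
    have := frobSq_le_of_right_proj B _ hBr
    rw [hfPV] at this
    have h2 : spec B ^ 2 * ((p:ℝ) - r) ≤ (1/4) * ((p:ℝ) - r) :=
      mul_le_mul_of_nonneg_right hsq hprnn
    linarith
  have hb2 : frobSq B ≤ (1/4 : ℝ) * ((t:ℝ) - r) := by
    have h1 := frobSq_le_of_right_proj Bᴴ _ hBHr
    rw [hfPU, spec_conjTranspose, frobSq_conjTranspose] at h1
    have h2 : spec B ^ 2 * ((t:ℝ) - r) ≤ (1/4) * ((t:ℝ) - r) :=
      mul_le_mul_of_nonneg_right hsq htrnn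
    linarith
  -- combine
  have hmin : frobSq Q ≤ (1/4 : ℝ) * ((min t p : ℝ) + 3 * r) := by
    rw [hpyth, hUVr]
    rcases le_total t p with h | h
    · rw [min_eq_left (show (t:ℝ) ≤ (p:ℝ) from Nat.cast_le.mpr h)]; linarith
    · rw [min_eq_right (show (p:ℝ) ≤ (t:ℝ) from Nat.cast_le.mpr h)]; linarith
  have hnn : (0:ℝ) ≤ (min t p : ℝ) + 3 * r := by positivity
  have hfrob : frob Q = Real.sqrt (frobSq Q) := rfl
  rw [hfrob]
  calc Real.sqrt (frobSq Q) ≤ Real.sqrt ((1/4 : ℝ) * ((min t p : ℝ) + 3 * r)) :=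
        Real.sqrt_le_sqrt hmin
    _ = (1/2 : ℝ) * Real.sqrt ((min t p : ℝ) + 3 * r) := by
        rw [show (1/4 : ℝ) = (1/2 : ℝ)^2 by norm_num,
          Real.sqrt_mul (by positivity), Real.sqrt_sq (by norm_num)]
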